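/- For every finite graph G with m(G) ≥ 2 such that log₂(m(G)) is not an integer, p(G) = ⌈log₂(m(G))⌉. -/

import Mathlib

/-- `M` is a module of `G`: every vertex outside `M` is adjacent to all of `M` or to none. -/
def IsModule {V : Type*} (G : SimpleGraph V) (M : Set V) : Prop :=
  ∀ v ∉ M, (∀ m ∈ M, G.Adj v m) ∨ (∀ m ∈ M, ¬ G.Adj v m)

/-- `G` is prime: at least 4 vertices and only trivial modules. -/
def IsPrimeGraph {V : Type*} (G : SimpleGraph V) : Prop :=
  4 ≤ Nat.card V ∧ ∀ M : Set V, IsModule G M → M = Set.univ ∨ M.Subsingleton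

/-- `M` is a clique: all distinct vertices of `M` are adjacent. -/
def IsCliqueSet {V : Type*} (G : SimpleGraph V) (M : Set V) : Prop :=
  ∀ a ∈ M, ∀ b ∈ M, a ≠ b → G.Adj a b

/-- `M` is a stable (independent) set. -/
def IsStableSet {V : Type*} (G : SimpleGraph V) (M : Set V) : Prop :=
  ∀ a ∈ M, ∀ b ∈ M, ¬ G.Adj a b

/-- `G` admits a prime extension obtained by adding exactly `p` new vertices. -/
def HasPrimeExt {V : Type*} (G : SimpleGraph V) (p : ℕ) : Prop :=
  ∃ H : SimpleGraph (V ⊕ Fin p),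
    (∀ a b : V, H.Adj (Sum.inl a) (Sum.inl b) ↔ G.Adj a b) ∧ IsPrimeGraph H

/-- The prime bound `p(G)`: the least number of added vertices in a prime extension. -/
noncomputable def primeBound {V : Type*} (G : SimpleGraph V) : ℕ :=
  sInf {p : ℕ | HasPrimeExt G p}

/-- `m(G)`: the largest cardinality of a module of `G` that is a clique or a stable set. -/
noncomputable def modCliqueStab {V : Type*} (G : SimpleGraph V) : ℕ :=
  sSup {n : ℕ | ∃ M : Set V, IsModule G M ∧ (IsCliqueSet G M ∨ IsStableSet G M) ∧ M.ncard = n}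

set_option linter.unusedSectionVars false
set_option linter.unusedVariables false

namespace PBP
open Finset
variable {V : Type*} [Fintype V] (G : SimpleGraph V)

/-- twins -/
def Twin (a b : V) : Prop := a ≠ b ∧ ∀ x, x ≠ a → x ≠ b → (G.Adj x a ↔ G.Adj x b)

variable {G}

lemma twin_symm {a b : V} (h : Twin G a b) : Twin G b a :=
  ⟨h.1.symm, fun x hx1 hx2 => (h.2 x hx2 hx1).symm⟩

lemma twin_adj_symm {a b : V} (h : Twin G a b) : G.Adj a b ↔ G.Adj b a :=
  ⟨fun h' => h'.symm, fun h' => h'.symm⟩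

lemma twin_trans {a b c : V} (hab : Twin G a b) (hbc : Twin G b c) (hac : a ≠ c) :
    Twin G a c := by
  refine ⟨hac, fun x hxa hxc => ?_⟩
  by_cases hxb : x = b
  · have e1 : G.Adj c a ↔ G.Adj c b := hab.2 c hac.symm hbc.1.symm
    have e2 : G.Adj a b ↔ G.Adj a c := hbc.2 a hab.1 hac
    rw [hxb, G.adj_comm b a, G.adj_comm b c, e2, G.adj_comm a c, e1, G.adj_comm c b]
  · exact (hab.2 x hxa hxb).trans (hbc.2 x hxb hxc)

lemma pair_module_iff_twin {a b : V} (hne : a ≠ b) :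
    IsModule G {a, b} ↔ Twin G a b := by
  constructor
  · intro h
    refine ⟨hne, fun x hxa hxb => ?_⟩
    have hx : x ∉ ({a, b} : Set V) := by simp [hxa, hxb]
    rcases h x hx with h' | h'
    · simp only [Set.mem_insert_iff, Set.mem_singleton_iff] at h'
      exact ⟨fun _ => h' b (Or.inr rfl), fun _ => h' a (Or.inl rfl)⟩
    · simp only [Set.mem_insert_iff, Set.mem_singleton_iff] at h'
      exact ⟨fun hh => absurd hh (h' a (Or.inl rfl)), fun hh => absurd hh (h' b (Or.inr rfl))⟩
  · intro h x hx
    simp only [Set.mem_insert_iff, Set.mem_singleton_iff, not_or] at hx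
    have := h.2 x hx.1 hx.2
    by_cases hadj : G.Adj x a
    · left; rintro m (rfl | rfl); exact hadj; exact this.mp hadj
    · right; rintro m (rfl | rfl); exact hadj; exact fun hh => hadj (this.mpr hh)

variable (G) in
def R (a b : V) : Prop := a = b ∨ Twin G a b

lemma R_symm {a b : V} (h : R G a b) : R G b a := by
  rcases h with rfl | h; exact Or.inl rfl; exact Or.inr (twin_symm h)

lemma R_trans {a b c : V} (hab : R G a b) (hbc : R G b c) : R G a c := by
  rcases hab with rfl | hab
  · exact hbc
  · rcases hbc with rfl | hbc
    · exact Or.inr hab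
    · by_cases hac : a = c
      · exact Or.inl hac
      · exact Or.inr (twin_trans hab hbc hac)

open Classical in
variable (G) in
noncomputable def cl (v : V) : Finset V := Finset.univ.filter (fun u => R G u v)

lemma mem_cl {u v : V} : u ∈ cl G v ↔ R G u v := by
  simp [cl]

lemma self_mem_cl (v : V) : v ∈ cl G v := mem_cl.mpr (Or.inl rfl)

lemma cl_eq_of_mem {u v : V} (h : u ∈ cl G v) : cl G u = cl G v := by
  ext w
  simp only [mem_cl] at *
  exact ⟨fun hw => R_trans hw h, fun hw => R_trans hw (R_symm h)⟩

lemma twin_of_mem_cl {v u w : V} (hu : u ∈ cl G v) (hw : w ∈ cl G v) (huw : u ≠ w) :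
    Twin G u w := by
  have := R_trans (mem_cl.mp hu) (R_symm (mem_cl.mp hw))
  rcases this with rfl | h; exact absurd rfl huw; exact h

lemma cl_step {v a b c : V} (hb : b ∈ cl G v) (hc : c ∈ cl G v) (hab : a ≠ b) (hac : a ≠ c)
    (hbc : b ≠ c) : G.Adj a b ↔ G.Adj a c :=
  (twin_of_mem_cl hb hc hbc).2 a hab hac

lemma cl_clique_or_stable (v : V) :
    (∀ x ∈ cl G v, ∀ y ∈ cl G v, x ≠ y → G.Adj x y) ∨
    (∀ x ∈ cl G v, ∀ y ∈ cl G v, ¬ G.Adj x y) := by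
  by_cases h : ∃ x ∈ cl G v, ∃ y ∈ cl G v, G.Adj x y
  · obtain ⟨x0, hx0, y0, hy0, hadj⟩ := h
    left
    intro x1 hx1 y1 hy1 hne
    by_contra hnon
    by_cases hyy : y0 = y1
    · have hxx : x0 ≠ x1 := fun e => hnon (e ▸ hyy ▸ hadj)
      have := cl_step (v := v) hx0 hx1 hadj.ne' (fun e => hne (hyy ▸ e.symm)) hxx
      rw [G.adj_comm y0 x0, G.adj_comm y0 x1] at this
      rw [hyy] at this
      exact hnon (this.mp (hyy ▸ hadj))
    · by_cases hxy1 : x0 = y1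
      · by_cases hx1y0 : x1 = y0
        · exact hnon (by rw [hx1y0, G.adj_comm, ← hxy1]; exact hadj)
        · have step : G.Adj y1 y0 ↔ G.Adj y1 x1 :=
            cl_step (v := v) hy0 hx1 (fun e => hyy (e.symm)) (Ne.symm hne) (fun e => hx1y0 e.symm)
          have : G.Adj y1 y0 := by rw [← hxy1]; exact hadj
          exact hnon ((step.mp this).symm)
      · have h2 : G.Adj x0 y0 ↔ G.Adj x0 y1 :=
          cl_step (v := v) hy0 hy1 hadj.ne hxy1 hyy
        have hx0y1 : G.Adj x0 y1 := h2.mp hadj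
        by_cases hx01 : x0 = x1
        · exact hnon (hx01 ▸ hx0y1)
        · have h3 : G.Adj y1 x0 ↔ G.Adj y1 x1 :=
            cl_step (v := v) hx0 hx1 (fun e => hxy1 e.symm) (Ne.symm hne) hx01
          exact hnon ((h3.mp hx0y1.symm).symm)
  · right
    push_neg at h
    exact fun x hx y hy => h x hx y hy

lemma cl_isModule (v : V) : IsModule G (↑(cl G v) : Set V) := by
  intro x hx
  by_cases h : ∃ u ∈ (↑(cl G v) : Set V), G.Adj x u
  · left
    obtain ⟨u0, hu0, hadj⟩ := h
    intro u hu
    by_cases e : u = u0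
    · exact e ▸ hadj
    · have hx0 : x ≠ u0 := fun e' => hx (e' ▸ hu0)
      have hxu : x ≠ u := fun e' => hx (e' ▸ hu)
      exact (cl_step (v := v) (Finset.mem_coe.mp hu0) (Finset.mem_coe.mp hu) hx0 hxu
        (fun e' => e (e'.symm))).mp hadj
  · right
    push_neg at h
    exact h

lemma bddAbove_mcs :
    BddAbove {n : ℕ | ∃ M : Set V, IsModule G M ∧ (IsCliqueSet G M ∨ IsStableSet G M) ∧
      M.ncard = n} := by
  refine ⟨Nat.card V, fun n hn => ?_⟩
  obtain ⟨M, _, _, hM⟩ := hn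
  rw [← hM, ← Set.ncard_univ]
  exact Set.ncard_le_ncard (Set.subset_univ M) Set.finite_univ

lemma cl_card_le (v : V) : (cl G v).card ≤ modCliqueStab G := by
  apply le_csSup bddAbove_mcs
  refine ⟨(↑(cl G v) : Set V), cl_isModule v, ?_, Set.ncard_coe_finset _⟩
  rcases cl_clique_or_stable (G := G) v with h | h
  · left; exact fun a ha b hb hab => h a ha b hb hab
  · right; exact fun a ha b hb => h a ha b hb

lemma exists_max_module : ∃ B : Set V, IsModule G B ∧
    (IsCliqueSet G B ∨ IsStableSet G B) ∧ B.ncard = modCliqueStab G := by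
  have h0 : ({n : ℕ | ∃ M : Set V, IsModule G M ∧ (IsCliqueSet G M ∨ IsStableSet G M) ∧
      M.ncard = n}).Nonempty := by
    refine ⟨0, ∅, fun v hv => Or.inl (fun m hm => absurd hm (Set.notMem_empty m)), ?_, by simp⟩
    left; exact fun a ha => absurd ha (Set.notMem_empty a)
  have := Nat.sSup_mem h0 bddAbove_mcs
  obtain ⟨M, h1, h2, h3⟩ := this
  exact ⟨M, h1, h2, h3⟩

lemma cl_eq_of_max {B : Set V} (hBmod : IsModule G B)
    (htype : IsCliqueSet G B ∨ IsStableSet G B) (hBcard : B.ncard = modCliqueStab G)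
    {v : V} (hv : v ∈ B) : (↑(cl G v) : Set V) = B := by
  have hsub : B ⊆ (↑(cl G v) : Set V) := by
    intro u hu
    rw [Finset.mem_coe, mem_cl]
    by_cases huv : u = v
    · exact Or.inl huv
    · refine Or.inr ⟨huv, fun x hxu hxv => ?_⟩
      by_cases hxB : x ∈ B
      · rcases htype with h | h
        · exact iff_of_true (h x hxB u hu hxu) (h x hxB v hv hxv)
        · exact iff_of_false (h x hxB u hu) (h x hxB v hv)
      · rcases hBmod x hxB with h | h
        · exact iff_of_true (h u hu) (h v hv)
        · exact iff_of_false (h u hu) (h v hv)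
  have hcard : (↑(cl G v) : Set V).ncard ≤ B.ncard := by
    rw [Set.ncard_coe_finset, hBcard]
    exact cl_card_le v
  exact (Set.eq_of_subset_of_ncard_le hsub hcard (Set.toFinite _)).symm

/-! ### minimal nontrivial modules -/

lemma adj_iff_of_module {N : Set V} (hN : IsModule G N) {v a b : V} (hv : v ∉ N)
    (ha : a ∈ N) (hb : b ∈ N) : G.Adj v a ↔ G.Adj v b := by
  rcases hN v hv with h | h
  · exact iff_of_true (h a ha) (h b hb)
  · exact iff_of_false (h a ha) (h b hb)

lemma uniform_or {S : Set V} {z : V}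
    (h : ∀ u ∈ S, ∀ u' ∈ S, (G.Adj z u ↔ G.Adj z u')) :
    (∀ u ∈ S, G.Adj z u) ∨ (∀ u ∈ S, ¬ G.Adj z u) := by
  by_cases he : ∃ u ∈ S, G.Adj z u
  · obtain ⟨u0, hu0, hadj⟩ := he
    exact Or.inl (fun u hu => (h u0 hu0 u hu).mp hadj)
  · push_neg at he
    exact Or.inr he

lemma inter_module {M N : Set V} (hM : IsModule G M) (hN : IsModule G N) :
    IsModule G (M ∩ N) := by
  intro v hv
  by_cases hvM : v ∈ M
  · have hvN : v ∉ N := fun h => hv ⟨hvM, h⟩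
    rcases hN v hvN with h | h
    · exact Or.inl (fun m hm => h m hm.2)
    · exact Or.inr (fun m hm => h m hm.2)
  · rcases hM v hvM with h | h
    · exact Or.inl (fun m hm => h m hm.1)
    · exact Or.inr (fun m hm => h m hm.1)

variable (G) in
def Minl (M : Set V) : Prop :=
  IsModule G M ∧ 2 ≤ M.ncard ∧ ∀ M' ⊆ M, IsModule G M' → 2 ≤ M'.ncard → M' = M

lemma exists_minl_aux : ∀ n : ℕ, ∀ M : Set V, M.ncard ≤ n → IsModule G M → 2 ≤ M.ncard →
    ∃ M₀, M₀ ⊆ M ∧ Minl G M₀ := by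
  intro n
  induction n with
  | zero => intro M h hm h2; omega
  | succ n ih =>
    intro M h hm h2
    by_cases hmin : ∀ M' ⊆ M, IsModule G M' → 2 ≤ M'.ncard → M' = M
    · exact ⟨M, subset_rfl, hm, h2, hmin⟩
    · push_neg at hmin
      obtain ⟨M', hsub, hmod, h2', hne⟩ := hmin
      have hlt : M'.ncard < M.ncard :=
        Set.ncard_lt_ncard (ssubset_of_subset_of_ne hsub hne) (Set.toFinite M)
      obtain ⟨M₀, h₀, hmin₀⟩ := ih M' (by omega) hmod h2'
      exact ⟨M₀, h₀.trans hsub, hmin₀⟩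

lemma exists_minl {M : Set V} (hM : IsModule G M) (h2 : 2 ≤ M.ncard) :
    ∃ M₀, M₀ ⊆ M ∧ Minl G M₀ :=
  exists_minl_aux M.ncard M le_rfl hM h2

lemma diff_module_of_outside_twin {M : Set V} (hM : IsModule G M) {z x : V} (hz : z ∈ M)
    (hx : x ∉ M) (htw : Twin G z x) : IsModule G (M \ {z}) := by
  intro v hv
  by_cases hvM : v ∈ M
  · have hvz : v = z := by
      by_contra h
      exact hv ⟨hvM, h⟩
    subst hvz
    apply uniform_or
    intro u hu u' hu'
    have hune : u ≠ v := fun e => hu.2 e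
    have hu'ne : u' ≠ v := fun e => hu'.2 e
    have h1 : G.Adj u v ↔ G.Adj u x := htw.2 u hune (fun e => hx (e ▸ hu.1))
    have h2 : G.Adj u' v ↔ G.Adj u' x := htw.2 u' hu'ne (fun e => hx (e ▸ hu'.1))
    have h3 : G.Adj x u ↔ G.Adj x u' := adj_iff_of_module hM hx hu.1 hu'.1
    rw [G.adj_comm v u, G.adj_comm v u', h1, h2, G.adj_comm u x, G.adj_comm u' x, h3]
  · rcases hM v hvM with h | h
    · exact Or.inl (fun m hm => h m hm.1)
    · exact Or.inr (fun m hm => h m hm.1)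

lemma minl_structure {M : Set V} (hm : Minl G M) :
    (∃ a b, a ≠ b ∧ M = {a, b}) ∨ (∀ z ∈ M, ∀ x, ¬ Twin G z x) := by
  by_cases h : ∃ z ∈ M, ∃ x, Twin G z x
  · left
    obtain ⟨z, hz, x, htw⟩ := h
    by_cases hxM : x ∈ M
    · have hsub : ({z, x} : Set V) ⊆ M := by
        intro w hw
        rcases hw with rfl | rfl
        · exact hz
        · exact hxM
      have hmod : IsModule G {z, x} := (pair_module_iff_twin htw.1).mpr htw
      have := hm.2.2 {z, x} hsub hmod (by rw [Set.ncard_pair htw.1])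
      exact ⟨z, x, htw.1, this.symm⟩
    · have hdm := diff_module_of_outside_twin hm.1 hz hxM htw
      by_cases h3 : 3 ≤ M.ncard
      · exfalso
        have hcard : (M \ {z}).ncard = M.ncard - 1 :=
          Set.ncard_diff_singleton_of_mem hz
        have := hm.2.2 (M \ {z}) Set.diff_subset hdm (by omega)
        have hzz : z ∈ M \ {z} := by rw [this]; exact hz
        exact hzz.2 rfl
      · have h2 : M.ncard = 2 := by
          have := hm.2.1
          omega
        obtain ⟨a, b, hab, hM2⟩ := Set.ncard_eq_two.mp h2
        exact ⟨a, b, hab, hM2⟩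
  · right
    push_neg at h
    exact fun z hz x htw => h z hz x htw

lemma minl_notwin_disjoint {M N : Set V} (hM : Minl G M) (hN : Minl G N)
    (hMnt : ∀ z ∈ M, ∀ x, ¬ Twin G z x) (hne : M ≠ N) : M ∩ N = ∅ := by
  by_contra h
  obtain ⟨z, hzM, hzN⟩ := Set.nonempty_iff_ne_empty.mpr h
  have hint : IsModule G (M ∩ N) := inter_module hM.1 hN.1
  by_cases h2 : 2 ≤ (M ∩ N).ncard
  · have e1 := hM.2.2 _ Set.inter_subset_left hint h2
    have e2 := hN.2.2 _ Set.inter_subset_right hint h2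
    exact hne (e1.symm.trans e2)
  · have hMN : M ∩ N = {z} := by
      apply Set.eq_singleton_iff_unique_mem.mpr
      refine ⟨⟨hzM, hzN⟩, fun w hw => ?_⟩
      by_contra hwz
      have : 1 < (M ∩ N).ncard := Set.one_lt_ncard_iff (Set.toFinite _) |>.mpr
        ⟨w, z, hw, ⟨hzM, hzN⟩, hwz⟩
      omega
    have hNM : ¬ N ⊆ M := by
      intro hsub
      exact hne ((hM.2.2 N hsub hN.1 hN.2.1).symm)
    obtain ⟨y, hyN, hyM⟩ := Set.not_subset.mp hNM
    have hdm : IsModule G (M \ {z}) := by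
      intro v hv
      by_cases hvM : v ∈ M
      · have hvz : v = z := by
          by_contra h'
          exact hv ⟨hvM, h'⟩
        subst hvz
        apply uniform_or
        intro u hu u' hu'
        have huN : u ∉ N := by
          intro h'
          have : u ∈ M ∩ N := ⟨hu.1, h'⟩
          rw [hMN] at this
          exact hu.2 this
        have hu'N : u' ∉ N := by
          intro h'
          have : u' ∈ M ∩ N := ⟨hu'.1, h'⟩
          rw [hMN] at this
          exact hu'.2 this
        have c1 : G.Adj u v ↔ G.Adj u y := adj_iff_of_module hN.1 huN hzN hyN
        have c2 : G.Adj u' v ↔ G.Adj u' y := adj_iff_of_module hN.1 hu'N hzN hyN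
        have c3 : G.Adj y u ↔ G.Adj y u' := adj_iff_of_module hM.1 hyM hu.1 hu'.1
        rw [G.adj_comm v u, G.adj_comm v u', c1, c2, G.adj_comm u y, G.adj_comm u' y, c3]
      · rcases hM.1 v hvM with h' | h'
        · exact Or.inl (fun m hm => h' m hm.1)
        · exact Or.inr (fun m hm => h' m hm.1)
    have hcard3 : 3 ≤ M.ncard := by
      by_contra hc
      have h2' : M.ncard = 2 := by
        have := hM.2.1
        omega
      obtain ⟨a, b, hab, hM2⟩ := Set.ncard_eq_two.mp h2'
      have htw : Twin G a b := (pair_module_iff_twin hab).mp (hM2 ▸ hM.1)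
      exact hMnt a (hM2 ▸ Set.mem_insert a {b}) b htw
    have hd : (M \ {z}).ncard = M.ncard - 1 :=
      Set.ncard_diff_singleton_of_mem hzM
    have := hM.2.2 (M \ {z}) Set.diff_subset hdm (by omega)
    have hzz : z ∈ M \ {z} := by rw [this]; exact hzM
    exact hzz.2 rfl

/-! ### lists of codes -/

section codes
variable (k : ℕ)

def singL : List (Finset (Fin k)) := (List.finRange k).map (fun i => {i})

def pairL : List (Finset (Fin k)) :=
  if h3 : 3 ≤ k then
    (List.range (k-1)).pmap
      (fun t ht => ({⟨t, by omega⟩, ⟨t+1, by omega⟩} : Finset (Fin k)))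
      (fun t ht => List.mem_range.mp ht)
  else []

open Classical in
noncomputable def restL : List (Finset (Fin k)) :=
  ((Finset.univ : Finset (Finset (Fin k))).filter
    (fun S => S ∉ singL k ∧ S ∉ pairL k ∧ S ≠ ∅ ∧ S ≠ Finset.univ)).toList

noncomputable def baseL : List (Finset (Fin k)) := singL k ++ pairL k ++ restL k

variable {k}

lemma mem_singL {S : Finset (Fin k)} : S ∈ singL k ↔ ∃ i : Fin k, S = {i} := by
  simp [singL, eq_comm]

lemma mem_pairL {S : Finset (Fin k)} (h : S ∈ pairL k) :
    3 ≤ k ∧ ∃ t : ℕ, ∃ h1 : t < k, ∃ h2 : t + 1 < k, S = {⟨t, h1⟩, ⟨t + 1, h2⟩} := by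
  by_cases h3 : 3 ≤ k
  · simp only [pairL, dif_pos h3, List.mem_pmap, List.mem_range] at h
    obtain ⟨t, ht, rfl⟩ := h
    exact ⟨h3, t, by omega, by omega, rfl⟩
  · simp [pairL, dif_neg h3] at h

lemma pair_card {t : ℕ} (h1 : t < k) (h2 : t + 1 < k) :
    ({⟨t, h1⟩, ⟨t + 1, h2⟩} : Finset (Fin k)).card = 2 := by
  rw [Finset.card_insert_of_notMem (by simp [Fin.ext_iff]), Finset.card_singleton]

lemma mem_baseL_proper (hk : 2 ≤ k) {S : Finset (Fin k)} (h : S ∈ baseL k) :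
    S ≠ ∅ ∧ S ≠ Finset.univ := by
  simp only [baseL, List.mem_append] at h
  rcases h with (h | h) | h
  · obtain ⟨i, rfl⟩ := mem_singL.mp h
    constructor
    · simp
    · intro he
      have : ({i} : Finset (Fin k)).card = k := by rw [he]; simp
      rw [Finset.card_singleton] at this; omega
  · obtain ⟨h3, t, h1, h2, rfl⟩ := mem_pairL h
    constructor
    · intro he
      have := pair_card h1 h2
      rw [he] at this; simp at this
    · intro he
      have := pair_card h1 h2
      rw [he] at this; simp at this; omega
  · simp only [restL, Finset.mem_toList, Finset.mem_filter] at h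
    exact ⟨h.2.2.2.1, h.2.2.2.2⟩

lemma mem_baseL_iff (hk : 2 ≤ k) {S : Finset (Fin k)} :
    S ∈ baseL k ↔ (S ≠ ∅ ∧ S ≠ Finset.univ) := by
  constructor
  · exact mem_baseL_proper hk
  · intro ⟨h1, h2⟩
    by_cases hs : S ∈ singL k
    · simp [baseL, hs]
    · by_cases hp : S ∈ pairL k
      · simp [baseL, hp]
      · simp [baseL, restL, hs, hp, h1, h2]

lemma nodup_baseL : (baseL k).Nodup := by
  have hs : (singL k).Nodup := by
    refine List.Nodup.map ?_ (List.nodup_finRange k)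
    intro a b hab
    simpa using hab
  have hp : (pairL k).Nodup := by
    by_cases h3 : 3 ≤ k
    · rw [pairL, dif_pos h3]
      refine List.Nodup.pmap ?_ List.nodup_range
      intro a ha b hb hab
      have ha' : a < k - 1 := ha
      have hb' : b < k - 1 := hb
      have : (⟨a, by omega⟩ : Fin k) ∈ ({⟨b, by omega⟩, ⟨b + 1, by omega⟩} : Finset (Fin k)) := by
        rw [← hab]; simp
      have h2 : (⟨b, by omega⟩ : Fin k) ∈ ({⟨a, by omega⟩, ⟨a + 1, by omega⟩} : Finset (Fin k)) := by
        rw [hab]; simp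
      simp only [Finset.mem_insert, Finset.mem_singleton, Fin.mk.injEq] at this h2
      omega
    · rw [pairL, dif_neg h3]; exact List.nodup_nil
  have hr : (restL k).Nodup := Finset.nodup_toList _
  rw [baseL, List.nodup_append', List.nodup_append']
  refine ⟨⟨hs, hp, ?_⟩, hr, ?_⟩
  · intro a ha hb
    obtain ⟨i, rfl⟩ := mem_singL.mp ha
    obtain ⟨h3, t, h1, h2, he⟩ := mem_pairL hb
    have := pair_card h1 h2
    rw [← he] at this
    simp at this
  · intro a ha hb
    simp only [restL, Finset.mem_toList, Finset.mem_filter] at hb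
    simp only [List.mem_append] at ha
    rcases ha with ha | ha
    · exact hb.2.1 ha
    · exact hb.2.2.1 ha

lemma length_baseL (hk : 2 ≤ k) : (baseL k).length = 2 ^ k - 2 := by
  have hnd := nodup_baseL (k := k)
  have : (baseL k).toFinset.card = (baseL k).length := List.toFinset_card_of_nodup hnd
  rw [← this]
  have he : (baseL k).toFinset =
      (Finset.univ : Finset (Finset (Fin k))).filter (fun S => S ≠ ∅ ∧ S ≠ Finset.univ) := by
    ext S
    simp only [List.mem_toFinset, Finset.mem_filter, Finset.mem_univ, true_and]
    exact mem_baseL_iff hk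
  rw [he]
  have h1 : (Finset.univ : Finset (Finset (Fin k))).filter
      (fun S => S ≠ ∅ ∧ S ≠ Finset.univ) =
      (Finset.univ : Finset (Finset (Fin k))) \ {∅, Finset.univ} := by
    ext S
    simp only [Finset.mem_filter, Finset.mem_univ, true_and, Finset.mem_sdiff,
      Finset.mem_insert, Finset.mem_singleton]
    tauto
  rw [h1, Finset.card_sdiff_of_subset (by intro x _; exact Finset.mem_univ x)]
  have h2 : ({∅, Finset.univ} : Finset (Finset (Fin k))).card = 2 := by
    have hne : Nonempty (Fin k) := ⟨⟨0, by omega⟩⟩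
    rw [Finset.card_insert_of_notMem, Finset.card_singleton]
    simp only [Finset.mem_singleton]
    intro he'
    have : (Finset.univ : Finset (Fin k)).Nonempty := Finset.univ_nonempty
    rw [← he'] at this
    exact Finset.not_nonempty_empty this
  rw [h2, Finset.card_univ, Fintype.card_finset, Fintype.card_fin]

noncomputable def EL (e : Finset (Fin k)) : List (Finset (Fin k)) := baseL k ++ [e]

lemma length_EL (hk : 2 ≤ k) (e : Finset (Fin k)) : (EL e).length = 2 ^ k - 1 := by
  have : (2 : ℕ) ^ 2 ≤ 2 ^ k := Nat.pow_le_pow_right (by norm_num) hk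
  simp [EL, length_baseL hk]
  omega

lemma nodup_EL (hk : 2 ≤ k) {e : Finset (Fin k)} (he : e = ∅ ∨ e = Finset.univ) :
    (EL e).Nodup := by
  rw [EL, List.nodup_append']
  refine ⟨nodup_baseL, List.nodup_singleton e, ?_⟩
  intro a ha hb
  rw [List.mem_singleton] at hb
  subst hb
  have := mem_baseL_proper hk ha
  rcases he with he | he <;> [exact this.1 he; exact this.2 he]

lemma EL_get_base (hk : 2 ≤ k) (e : Finset (Fin k)) {i : ℕ} (hi : i < (baseL k).length) :
    (EL e)[i]'(by simp [EL]; omega) = (baseL k)[i] :=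
  List.getElem_append_left hi

lemma EL_get_last (e : Finset (Fin k)) :
    (EL e)[(baseL k).length]'(by simp [EL]) = e := by
  simp only [EL]
  rw [List.getElem_append_right (le_refl _)]
  simp

lemma two_pow_ge (hk : 2 ≤ k) : k + 2 ≤ 2 ^ k := by
  induction k with
  | zero => omega
  | succ n ih =>
    by_cases h : 2 ≤ n
    · have := ih h
      rw [pow_succ]
      omega
    · have hn : n = 1 := by omega
      subst hn
      norm_num

lemma two_mul_le {n : ℕ} (hn : 1 ≤ n) : 2 * n ≤ 2 ^ n := by
  induction n with
  | zero => omega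
  | succ n ih =>
    by_cases h : 1 ≤ n
    · have := ih h
      rw [pow_succ]
      omega
    · have hn : n = 0 := by omega
      subst hn
      norm_num

lemma length_singL : (singL k).length = k := by
  simp [singL]

lemma baseL_get_sing (hk : 2 ≤ k) {i : ℕ} (hi : i < k) (hlen : i < (baseL k).length) :
    (baseL k)[i] = {(⟨i, hi⟩ : Fin k)} := by
  have h1 : i < (singL k).length := by rw [length_singL]; exact hi
  have h0 : i < (singL k ++ pairL k).length := by
    rw [List.length_append]; omega
  simp only [baseL]
  rw [List.getElem_append_left h0, List.getElem_append_left h1]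
  simp [singL]

lemma length_pairL (h3 : 3 ≤ k) : (pairL k).length = k - 1 := by
  simp [pairL, dif_pos h3]

lemma baseL_get_pair (h3 : 3 ≤ k) {t : ℕ} (ht : t < k - 1) (hlen : k + t < (baseL k).length) :
    (baseL k)[k + t] =
      ({⟨t, by omega⟩, ⟨t + 1, by omega⟩} : Finset (Fin k)) := by
  have h1 : (singL k).length ≤ k + t := by rw [length_singL]; omega
  have h0 : k + t < (singL k ++ pairL k).length := by
    rw [List.length_append, length_singL, length_pairL h3]; omega
  simp only [baseL]
  rw [List.getElem_append_left h0, List.getElem_append_right h1]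
  have h4 : k + t - (singL k).length = t := by rw [length_singL]; omega
  simp only [pairL, dif_pos h3]
  rw [List.getElem_pmap]
  congr 1 <;> simp [List.getElem_range, h4]

end codes

/-! ### rank within twin class, and the coloring -/

variable (V) in
noncomputable def keyF : V → ℕ := fun v => (Fintype.equivFin V v : ℕ)

lemma keyF_inj {a b : V} (h : keyF V a = keyF V b) : a = b :=
  (Fintype.equivFin V).injective (Fin.ext h)

open Classical in
variable (G) in
noncomputable def rank (v : V) : ℕ := ((cl G v).filter (fun u => keyF V u < keyF V v)).card

lemma rank_lt_card (v : V) : rank G v < (cl G v).card := by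
  classical
  have hsub : (cl G v).filter (fun u => keyF V u < keyF V v) ⊆ (cl G v).erase v := by
    intro u hu
    rw [Finset.mem_filter] at hu
    refine Finset.mem_erase.mpr ⟨?_, hu.1⟩
    intro e
    subst e
    exact absurd hu.2 (lt_irrefl _)
  have h1 := Finset.card_le_card hsub
  have h2 : ((cl G v).erase v).card = (cl G v).card - 1 :=
    Finset.card_erase_of_mem (self_mem_cl v)
  have h3 : 1 ≤ (cl G v).card := Finset.card_pos.mpr ⟨v, self_mem_cl v⟩
  unfold rank
  omega

lemma rank_lt_rank {u w : V} (hcl : cl G u = cl G w) (hlt : keyF V u < keyF V w) :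
    rank G u < rank G w := by
  classical
  unfold rank
  rw [hcl]
  apply Finset.card_lt_card
  refine Finset.ssubset_def.mpr ⟨?_, fun hsup => ?_⟩
  · intro x hx
    rw [Finset.mem_filter] at *
    exact ⟨hx.1, hx.2.trans hlt⟩
  · have hu : u ∈ (cl G w).filter (fun x => keyF V x < keyF V w) :=
      Finset.mem_filter.mpr ⟨hcl ▸ self_mem_cl u, hlt⟩
    have := Finset.mem_filter.mp (hsup hu)
    exact absurd this.2 (lt_irrefl _)

lemma rank_ne_of_ne {u w : V} (hcl : cl G u = cl G w) (hne : u ≠ w) :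
    rank G u ≠ rank G w := by
  have hk : keyF V u ≠ keyF V w := fun e => hne (keyF_inj e)
  rcases lt_or_gt_of_ne hk with h | h
  · exact Nat.ne_of_lt (rank_lt_rank hcl h)
  · exact (Nat.ne_of_lt (rank_lt_rank hcl.symm h)).symm

lemma rank_surj (v : V) {r : ℕ} (hr : r < (cl G v).card) :
    ∃ u ∈ cl G v, rank G u = r := by
  classical
  have hinj : ∀ x ∈ cl G v, ∀ y ∈ cl G v, rank G x = rank G y → x = y := by
    intro x hx y hy hxy
    by_contra hne
    exact rank_ne_of_ne ((cl_eq_of_mem hx).trans (cl_eq_of_mem hy).symm) hne hxy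
  have hcard : ((cl G v).image (rank G)).card = (cl G v).card :=
    Finset.card_image_of_injOn hinj
  have hsub : (cl G v).image (rank G) ⊆ Finset.range ((cl G v).card) := by
    intro r' hr'
    rw [Finset.mem_image] at hr'
    obtain ⟨u, hu, rfl⟩ := hr'
    rw [Finset.mem_range, ← cl_eq_of_mem hu]
    exact rank_lt_card u
  have := Finset.eq_of_subset_of_card_le hsub (by rw [hcard, Finset.card_range])
  have hmem : r ∈ (cl G v).image (rank G) := by
    rw [this, Finset.mem_range]
    exact hr
  rw [Finset.mem_image] at hmem
  exact hmem

variable (G) in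
def cliquish (D : Finset V) : Prop := ∃ x ∈ D, ∃ y ∈ D, G.Adj x y

open Classical in
variable (G) in
noncomputable def extraOf (k : ℕ) (D : Finset V) : Finset (Fin k) :=
  if cliquish G D then ∅ else Finset.univ

variable (G) in
def RepSet : Set V := {v | ∃ M : Set V, Minl G M ∧ (∀ z ∈ M, ∀ x, ¬ Twin G z x) ∧
  ∃ h : M.Nonempty, v = h.some}

open Classical in
variable (G) in
noncomputable def colr {k : ℕ} (hk : 2 ≤ k) : V → Finset (Fin k) := fun v =>
  if v ∈ RepSet G then {(⟨1, by omega⟩ : Fin k)}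
  else (EL (extraOf G k (cl G v))).getD (rank G v) ∅

section spec
variable {k : ℕ} (hk : 2 ≤ k) (hmk : modCliqueStab G ≤ 2 ^ k - 1)

lemma repset_no_twin {v : V} (hv : v ∈ RepSet G) : ∀ x, ¬ Twin G v x := by
  obtain ⟨M, hM, hnt, hne, rfl⟩ := hv
  exact hnt _ hne.some_mem

lemma cl_of_no_twin {v : V} (hv : ∀ x, ¬ Twin G v x) : cl G v = {v} := by
  ext u
  rw [mem_cl, Finset.mem_singleton]
  constructor
  · rintro (rfl | htw)
    · rfl
    · exact absurd (twin_symm htw) (hv u)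
  · rintro rfl
    exact Or.inl rfl

lemma rank_of_no_twin {v : V} (hv : ∀ x, ¬ Twin G v x) : rank G v = 0 := by
  classical
  unfold rank
  rw [cl_of_no_twin hv, Finset.filter_singleton]
  simp

include hk hmk in
lemma rank_lt_EL (v : V) (e : Finset (Fin k)) : rank G v < (EL e).length := by
  have h1 := rank_lt_card (G := G) v
  have h2 := cl_card_le (G := G) v
  have h3 := length_EL hk e
  omega

include hk hmk in
lemma colr_eq_get {v : V} (hv : v ∉ RepSet G) :
    colr G hk v = (EL (extraOf G k (cl G v)))[rank G v]'(rank_lt_EL hk hmk v _) := by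
  unfold colr
  rw [if_neg hv]
  exact List.getD_eq_getElem _ _ _

lemma extraOf_cases (D : Finset V) : extraOf G k D = ∅ ∨ extraOf G k D = Finset.univ := by
  unfold extraOf
  split <;> simp

end spec

/-! ### properties of the coloring -/

lemma two_mul_lt {k : ℕ} (h3 : 3 ≤ k) : 2 * k < 2 ^ k := by
  induction k with
  | zero => omega
  | succ n ih =>
    by_cases h : 3 ≤ n
    · have := ih h
      rw [pow_succ]
      omega
    · have hn : n = 2 := by omega
      subst hn
      norm_num

lemma k_le_two_pow_pred {k : ℕ} (hk : 2 ≤ k) : k ≤ 2 ^ (k - 1) := by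
  have := Nat.lt_two_pow_self (n := k - 1)
  omega

section spec2
variable {k : ℕ} (hk : 2 ≤ k) (hmk : modCliqueStab G ≤ 2 ^ k - 1)

include hk in
lemma colr_of_repset {v : V} (hv : v ∈ RepSet G) :
    colr G hk v = {(⟨1, by omega⟩ : Fin k)} := by
  unfold colr
  rw [if_pos hv]

include hk hmk in
lemma colr_module_subsingleton {M : Set V} (hM : IsModule G M)
    (hc : ∀ x ∈ M, ∀ y ∈ M, colr G hk x = colr G hk y) : M.Subsingleton := by
  by_contra hns
  rw [Set.not_subsingleton_iff] at hns
  obtain ⟨x, hx, y, hy, hxy⟩ := hns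
  have h2 : 2 ≤ M.ncard := Set.one_lt_ncard_iff (Set.toFinite M) |>.mpr ⟨x, y, hx, hy, hxy⟩
  obtain ⟨M₀, hsub, hmin⟩ := exists_minl hM h2
  rcases minl_structure hmin with ⟨a, b, hab, hM0⟩ | hnt
  · have htw : Twin G a b := (pair_module_iff_twin hab).mp (hM0 ▸ hmin.1)
    have haM : a ∈ M := hsub (hM0 ▸ Set.mem_insert a {b})
    have hbM : b ∈ M := hsub (hM0 ▸ (by simp : b ∈ ({a, b} : Set V)))
    have haR : a ∉ RepSet G := fun h => repset_no_twin h b htw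
    have hbR : b ∉ RepSet G := fun h => repset_no_twin h a (twin_symm htw)
    have hclab : cl G b = cl G a := cl_eq_of_mem (mem_cl.mpr (Or.inr (twin_symm htw)))
    have hrank := rank_ne_of_ne hclab.symm hab
    have hca := colr_eq_get (G := G) hk hmk haR
    have hcb := colr_eq_get (G := G) hk hmk hbR
    rw [hclab] at hcb
    have heq := hc a haM b hbM
    rw [hca, hcb] at heq
    have hnd : (EL (extraOf G k (cl G a))).Nodup := nodup_EL hk (extraOf_cases _)
    exact hrank ((List.Nodup.getElem_inj_iff hnd).mp heq)
  · have hne0 : M₀.Nonempty := by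
      apply Set.nonempty_of_ncard_ne_zero
      have := hmin.2.1
      omega
    have hrM : hne0.some ∈ M₀ := hne0.some_mem
    have hrR : hne0.some ∈ RepSet G := ⟨M₀, hmin, hnt, hne0, rfl⟩
    obtain ⟨a, b, ha, hb, hab⟩ := (Set.one_lt_ncard_iff (Set.toFinite M₀)).mp hmin.2.1
    have hu : ∃ u ∈ M₀, u ≠ hne0.some := by
      by_cases h : a = hne0.some
      · exact ⟨b, hb, fun e => hab (h.trans e.symm)⟩
      · exact ⟨a, ha, h⟩
    obtain ⟨u, huM, hur⟩ := hu
    have huR : u ∉ RepSet G := by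
      rintro ⟨M', hM', hnt', hne', rfl⟩
      by_cases he : M₀ = M'
      · subst he
        exact hur (congrArg Set.Nonempty.some (Subsingleton.elim hne' hne0))
      · have hdisj := minl_notwin_disjoint hmin hM' hnt he
        have hmem : hne'.some ∈ M₀ ∩ M' := ⟨huM, hne'.some_mem⟩
        rw [hdisj] at hmem
        exact hmem
    have hranku : rank G u = 0 := rank_of_no_twin (fun x => hnt u huM x)
    have hcu := colr_eq_get (G := G) hk hmk huR
    have hlen0 : (0 : ℕ) < (baseL k).length := by
      rw [length_baseL hk]
      have := two_pow_ge hk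
      omega
    have hcu0 : colr G hk u = {(⟨0, by omega⟩ : Fin k)} := by
      rw [hcu]
      simp only [hranku]
      rw [EL_get_base hk _ hlen0]
      exact baseL_get_sing hk (by omega) hlen0
    have hcr : colr G hk hne0.some = {(⟨1, by omega⟩ : Fin k)} := colr_of_repset hk hrR
    have := hc u (hsub huM) hne0.some (hsub hrM)
    rw [hcu0, hcr] at this
    have : (⟨0, by omega⟩ : Fin k) = ⟨1, by omega⟩ := Finset.singleton_injective this
    simp [Fin.ext_iff] at this

include hk hmk in
lemma colr_empty_witness {v : V} (hv0 : colr G hk v = ∅) (i : Fin k) :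
    ∃ y, G.Adj v y ∧ i ∉ colr G hk y ∧ colr G hk y ≠ ∅ := by
  have hvR : v ∉ RepSet G := by
    intro h
    rw [colr_of_repset hk h] at hv0
    simp at hv0
  have hv := hv0
  rw [colr_eq_get (G := G) hk hmk hvR] at hv
  have hlt := rank_lt_EL (G := G) hk hmk v (extraOf G k (cl G v))
  have hlen : (EL (extraOf G k (cl G v))).length = (baseL k).length + 1 := by simp [EL]
  by_cases hr : rank G v < (baseL k).length
  · rw [EL_get_base hk _ hr] at hv
    exact absurd hv (mem_baseL_proper hk (List.getElem_mem _)).1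
  · have hreq : rank G v = (baseL k).length := by omega
    have hv2 : extraOf G k (cl G v) = ∅ := by
      rw [← EL_get_last (extraOf G k (cl G v)), ← hv]
      congr 1
      omega
    have hNE : Nonempty (Fin k) := ⟨⟨0, by omega⟩⟩
    have hcliq : cliquish G (cl G v) := by
      by_contra h
      unfold extraOf at hv2
      rw [if_neg h] at hv2
      exact (Finset.univ_nonempty (α := Fin k)).ne_empty hv2
    have hcard : 2 ^ k - 2 < (cl G v).card := by
      have := rank_lt_card (G := G) v
      rw [hreq, length_baseL hk] at this
      omega
    obtain ⟨j, hji⟩ : ∃ j : Fin k, j ≠ i := by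
      by_cases h : i = ⟨0, by omega⟩
      · refine ⟨⟨1, by omega⟩, ?_⟩
        rw [h]
        simp [Fin.ext_iff]
      · exact ⟨⟨0, by omega⟩, fun e => h e.symm⟩
    have hjlt : (j : ℕ) < (cl G v).card := by
      have hj2 := j.2
      have := two_pow_ge hk
      omega
    obtain ⟨u, huc, hru⟩ := rank_surj v hjlt
    have hclu : cl G u = cl G v := cl_eq_of_mem huc
    have huR : u ∉ RepSet G := by
      intro h
      have h1 : cl G u = {u} := cl_of_no_twin (repset_no_twin h)
      have h2 : ({u} : Finset V).card = (cl G v).card := by rw [← h1, hclu]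
      rw [Finset.card_singleton] at h2
      have := two_pow_ge hk
      omega
    have hjb : (j : ℕ) < (baseL k).length := by
      rw [length_baseL hk]
      have hj2 := j.2
      have := two_pow_ge hk
      omega
    have hcu : colr G hk u = {j} := by
      rw [colr_eq_get (G := G) hk hmk huR]
      simp only [hclu, hru]
      rw [EL_get_base hk _ hjb]
      rw [baseL_get_sing hk j.2 hjb]
    refine ⟨u, ?_, ?_, ?_⟩
    · rcases cl_clique_or_stable (G := G) v with hcl | hst
      · apply hcl v (self_mem_cl v) u huc
        intro e
        rw [← e, hv0] at hcu
        exact (Finset.singleton_ne_empty j) hcu.symm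
      · exfalso
        obtain ⟨x, hx, y, hy, hadj⟩ := hcliq
        exact hst x hx y hy hadj
    · rw [hcu, Finset.mem_singleton]
      exact fun e => hji (e.symm)
    · rw [hcu]
      exact Finset.singleton_ne_empty j

include hk hmk in
lemma colr_univ_witness {v : V} (hv0 : colr G hk v = Finset.univ) :
    ∃ y, ¬ G.Adj v y ∧ y ≠ v ∧ colr G hk y ≠ ∅ ∧ colr G hk y ≠ Finset.univ := by
  have huniv_card : (Finset.univ : Finset (Fin k)).card = k := by simp
  have hvR : v ∉ RepSet G := by
    intro h
    rw [colr_of_repset hk h] at hv0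
    have : ({(⟨1, by omega⟩ : Fin k)} : Finset (Fin k)).card = k := by rw [hv0, huniv_card]
    rw [Finset.card_singleton] at this
    omega
  have hv := hv0
  rw [colr_eq_get (G := G) hk hmk hvR] at hv
  have hlt := rank_lt_EL (G := G) hk hmk v (extraOf G k (cl G v))
  have hlen : (EL (extraOf G k (cl G v))).length = (baseL k).length + 1 := by simp [EL]
  by_cases hr : rank G v < (baseL k).length
  · rw [EL_get_base hk _ hr] at hv
    exact absurd hv (mem_baseL_proper hk (List.getElem_mem _)).2
  · have hreq : rank G v = (baseL k).length := by omega
    have hv2 : extraOf G k (cl G v) = Finset.univ := by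
      rw [← EL_get_last (extraOf G k (cl G v)), ← hv]
      congr 1
      omega
    have hncliq : ¬ cliquish G (cl G v) := by
      intro h
      unfold extraOf at hv2
      rw [if_pos h] at hv2
      have hNE : Nonempty (Fin k) := ⟨⟨0, by omega⟩⟩
      exact (Finset.univ_nonempty (α := Fin k)).ne_empty hv2.symm
    have hcard : 2 ^ k - 2 < (cl G v).card := by
      have := rank_lt_card (G := G) v
      rw [hreq, length_baseL hk] at this
      omega
    have h0lt : (0 : ℕ) < (cl G v).card := by omega
    have h0b : (0 : ℕ) < (baseL k).length := by
      rw [length_baseL hk]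
      have := two_pow_ge hk
      omega
    have hjlt : (0 : ℕ) < (cl G v).card := by
      have := two_pow_ge hk
      omega
    obtain ⟨u, huc, hru⟩ := rank_surj v hjlt
    have hclu : cl G u = cl G v := cl_eq_of_mem huc
    have huR : u ∉ RepSet G := by
      intro h
      have h1 : cl G u = {u} := cl_of_no_twin (repset_no_twin h)
      have h2 : ({u} : Finset V).card = (cl G v).card := by rw [← h1, hclu]
      rw [Finset.card_singleton] at h2
      have := two_pow_ge hk
      omega
    have hcu : colr G hk u = {(⟨0, by omega⟩ : Fin k)} := by
      rw [colr_eq_get (G := G) hk hmk huR]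
      simp only [hclu, hru]
      rw [EL_get_base hk _ h0b]
      exact baseL_get_sing hk (by omega) h0b
    have hune : u ≠ v := by
      intro e
      rw [e, hv0] at hcu
      have : (Finset.univ : Finset (Fin k)).card = 1 := by rw [hcu, Finset.card_singleton]
      rw [huniv_card] at this
      omega
    refine ⟨u, ?_, hune, ?_, ?_⟩
    · intro hadj
      exact hncliq ⟨v, self_mem_cl v, u, huc, hadj⟩
    · rw [hcu]
      exact Finset.singleton_ne_empty _
    · rw [hcu]
      intro e
      have : (Finset.univ : Finset (Fin k)).card = 1 := by rw [← e, Finset.card_singleton]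
      rw [huniv_card] at this
      omega

include hk hmk in
lemma big_notrep {v₀ : V} (hbig : 2 ^ (k - 1) < (cl G v₀).card) {u : V}
    (huc : u ∈ cl G v₀) : u ∉ RepSet G := by
  intro h
  have h1 : cl G u = {u} := cl_of_no_twin (repset_no_twin h)
  have h2 : ({u} : Finset V).card = (cl G v₀).card := by rw [← h1, cl_eq_of_mem huc]
  rw [Finset.card_singleton] at h2
  have h3 : 2 ≤ 2 ^ (k - 1) := by
    have : (2:ℕ) ^ 1 ≤ 2 ^ (k - 1) := Nat.pow_le_pow_right (by norm_num) (by omega)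
    simpa using this
  omega

include hk hmk in
lemma big_sing {v₀ : V} (hbig : 2 ^ (k - 1) < (cl G v₀).card) (i : Fin k) :
    ∃ u ∈ cl G v₀, colr G hk u = {i} := by
  have hklt := k_le_two_pow_pred hk
  have hilt : (i : ℕ) < (cl G v₀).card := by
    have := i.2
    omega
  obtain ⟨u, huc, hru⟩ := rank_surj v₀ hilt
  have hjb : (i : ℕ) < (baseL k).length := by
    rw [length_baseL hk]
    have := i.2
    have := two_pow_ge hk
    omega
  refine ⟨u, huc, ?_⟩
  rw [colr_eq_get (G := G) hk hmk (big_notrep hk hmk hbig huc)]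
  simp only [cl_eq_of_mem huc, hru]
  rw [EL_get_base hk _ hjb, baseL_get_sing hk i.2 hjb]

include hk hmk in
lemma big_pair (h3 : 3 ≤ k) {v₀ : V} (hbig : 2 ^ (k - 1) < (cl G v₀).card) {t : ℕ}
    (ht : t < k - 1) :
    ∃ u ∈ cl G v₀, colr G hk u
      = ({⟨t, by omega⟩, ⟨t + 1, by omega⟩} : Finset (Fin k)) := by
  have h2m : 2 * (k - 1) ≤ 2 ^ (k - 1) := two_mul_le (by omega)
  have hilt : k + t < (cl G v₀).card := by omega
  obtain ⟨u, huc, hru⟩ := rank_surj v₀ hilt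
  have hjb : k + t < (baseL k).length := by
    rw [length_baseL hk]
    have := two_mul_lt h3
    omega
  refine ⟨u, huc, ?_⟩
  rw [colr_eq_get (G := G) hk hmk (big_notrep hk hmk hbig huc)]
  simp only [cl_eq_of_mem huc, hru]
  rw [EL_get_base hk _ hjb, baseL_get_pair h3 ht hjb]

include hk hmk in
lemma big_extra {v₀ : V} (hcard : (cl G v₀).card = 2 ^ k - 1) :
    ∃ u ∈ cl G v₀, colr G hk u = extraOf G k (cl G v₀) := by
  have h4 : 4 ≤ 2 ^ k := by
    have : (2:ℕ) ^ 2 ≤ 2 ^ k := Nat.pow_le_pow_right (by norm_num) hk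
    simpa using this
  have hilt : 2 ^ k - 2 < (cl G v₀).card := by omega
  obtain ⟨u, huc, hru⟩ := rank_surj v₀ hilt
  have hbig : 2 ^ (k - 1) < (cl G v₀).card := by
    have h5 : 2 ^ k = 2 * 2 ^ (k - 1) := by
      rw [← pow_succ']
      congr 1
      omega
    have h6 : 2 ≤ 2 ^ (k - 1) := by
      have : (2:ℕ) ^ 1 ≤ 2 ^ (k - 1) := Nat.pow_le_pow_right (by norm_num) (by omega)
      simpa using this
    omega
  have hreq : (2:ℕ) ^ k - 2 = (baseL k).length := by rw [length_baseL hk]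
  rw [hreq] at hru
  refine ⟨u, huc, ?_⟩
  rw [colr_eq_get (G := G) hk hmk (big_notrep hk hmk hbig huc)]
  simp only [cl_eq_of_mem huc, hru]
  exact EL_get_last _

end spec2

/-! ### the extension graph -/

lemma exists_boundary {k : ℕ} (P : ℕ → Prop) {a b : ℕ} (ha : a < k) (hb : b < k)
    (hPa : P a) (hPb : ¬ P b) :
    ∃ t, t + 1 < k ∧ ((P t ∧ ¬ P (t + 1)) ∨ (¬ P t ∧ P (t + 1))) := by
  by_contra h
  push_neg at h
  have hstep : ∀ t, t + 1 < k → (P t ↔ P (t + 1)) := by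
    intro t ht
    have := h t ht
    by_cases h1 : P t <;> by_cases h2 : P (t + 1) <;> tauto
  have hconst : ∀ d x, x + d < k → (P x ↔ P (x + d)) := by
    intro d
    induction d with
    | zero => intro x _; simp
    | succ n ih =>
      intro x hx
      have h1 := ih x (by omega)
      have h2 := hstep (x + n) (by omega)
      rw [h1]
      rw [show x + (n + 1) = x + n + 1 by omega]
      exact h2
  rcases le_total a b with hab | hab
  · obtain ⟨d, rfl⟩ : ∃ d, b = a + d := ⟨b - a, by omega⟩
    exact hPb ((hconst d a (by omega)).mp hPa)
  · obtain ⟨d, rfl⟩ : ∃ d, a = b + d := ⟨a - b, by omega⟩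
    exact hPb ((hconst d b (by omega)).mpr hPa)

variable (G) in
def extG {k : ℕ} (c : V → Finset (Fin k)) : SimpleGraph (V ⊕ Fin k) where
  Adj x y := match x, y with
    | Sum.inl a, Sum.inl b => G.Adj a b
    | Sum.inl a, Sum.inr i => i ∈ c a
    | Sum.inr i, Sum.inl a => i ∈ c a
    | Sum.inr _, Sum.inr _ => False
  symm := by
    refine ⟨?_⟩
    rintro (a | i) (b | j) h
    · exact h.symm
    · exact h
    · exact h
    · exact h.elim
  loopless := by
    refine ⟨?_⟩
    rintro (a | i) h
    · exact G.loopless.irrefl a h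
    · exact h

lemma extG_adj_ll {k : ℕ} {c : V → Finset (Fin k)} {a b : V} :
    (extG G c).Adj (Sum.inl a) (Sum.inl b) ↔ G.Adj a b := Iff.rfl

lemma extG_adj_lr {k : ℕ} {c : V → Finset (Fin k)} {a : V} {i : Fin k} :
    (extG G c).Adj (Sum.inl a) (Sum.inr i) ↔ i ∈ c a := Iff.rfl

lemma extG_adj_rl {k : ℕ} {c : V → Finset (Fin k)} {a : V} {i : Fin k} :
    (extG G c).Adj (Sum.inr i) (Sum.inl a) ↔ i ∈ c a := Iff.rfl

lemma extG_adj_rr {k : ℕ} {c : V → Finset (Fin k)} {i j : Fin k} :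
    ¬ (extG G c).Adj (Sum.inr i) (Sum.inr j) := fun h => h

/-! ### primeness of the extension -/

theorem extG_prime {k : ℕ} (hk : 2 ≤ k) (hmk : modCliqueStab G ≤ 2 ^ k - 1)
    {B : Set V} (hBmod : IsModule G B) (htype : IsCliqueSet G B ∨ IsStableSet G B)
    (hBcard : B.ncard = modCliqueStab G)
    (hm3 : 3 ≤ modCliqueStab G) (hmlow : 2 ^ (k - 1) < modCliqueStab G) :
    IsPrimeGraph (extG G (colr G hk)) := by
  obtain ⟨v₀, hv₀⟩ : B.Nonempty := by
    apply Set.nonempty_of_ncard_ne_zero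
    omega
  have hclB : (↑(cl G v₀) : Set V) = B := cl_eq_of_max hBmod htype hBcard hv₀
  have hcard0 : (cl G v₀).card = modCliqueStab G := by
    rw [← hBcard, ← hclB, Set.ncard_coe_finset]
  have hbig : 2 ^ (k - 1) < (cl G v₀).card := by omega
  have hmemB : ∀ u, u ∈ cl G v₀ → u ∈ B := by
    intro u hu
    rw [← hclB]
    exact hu
  -- the B-type alternative with stable witness
  have hBalt : IsCliqueSet G B ∨ (IsStableSet G B ∧
      ∀ i : Fin k, ∃ u ∈ B, i ∈ colr G hk u ∧ colr G hk u ≠ {i}) := by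
    rcases htype with hcl | hst
    · exact Or.inl hcl
    · refine Or.inr ⟨hst, fun i => ?_⟩
      by_cases h3 : 3 ≤ k
      · have hi2 := i.2
        set t : ℕ := if (i : ℕ) = 0 then 0 else (i : ℕ) - 1 with hts
        have ht : t < k - 1 := by
          rw [hts]
          split <;> omega
        obtain ⟨u, huc, hcu⟩ := big_pair hk hmk h3 hbig ht
        refine ⟨u, hmemB u huc, ?_, ?_⟩
        · rw [hcu]
          by_cases h0 : (i : ℕ) = 0
          · have hie : i = ⟨t, by omega⟩ := by
              apply Fin.ext
              show (i : ℕ) = t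
              rw [hts]
              simp [h0]
            rw [hie]
            simp
          · have hie : i = ⟨t + 1, by omega⟩ := by
              apply Fin.ext
              show (i : ℕ) = t + 1
              rw [hts]
              simp only [if_neg h0]
              omega
            rw [hie]
            simp
        · rw [hcu]
          intro he
          have h1 := pair_card (k := k) (t := t) (by omega) (by omega)
          rw [he, Finset.card_singleton] at h1
          omega
      · have hk2 : k = 2 := by omega
        have hcard2 : (cl G v₀).card = 2 ^ k - 1 := by
          have : modCliqueStab G = 3 := by
            rw [hk2] at hmk
            norm_num at hmk
            omega
          rw [hcard0, this, hk2]
          norm_num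
        obtain ⟨u, huc, hcu⟩ := big_extra hk hmk hcard2
        have hncliq : ¬ cliquish G (cl G v₀) := by
          rintro ⟨x, hx, y, hy, hadj⟩
          exact hst x (hmemB x hx) y (hmemB y hy) hadj
        have hext : extraOf G k (cl G v₀) = Finset.univ := by
          unfold extraOf
          rw [if_neg hncliq]
        refine ⟨u, hmemB u huc, ?_, ?_⟩
        · rw [hcu, hext]
          exact Finset.mem_univ i
        · rw [hcu, hext]
          intro he
          have : (Finset.univ : Finset (Fin k)).card = 1 := by
            rw [he, Finset.card_singleton]
          simp at this
          omega
  constructor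
  · -- at least 4 vertices
    have hV : 3 ≤ Nat.card V := by
      have h1 : B.ncard ≤ Nat.card V := by
        rw [← Set.ncard_univ]
        exact Set.ncard_le_ncard (Set.subset_univ _) Set.finite_univ
      omega
    rw [Nat.card_sum]
    have hfk : Nat.card (Fin k) = k := by simp
    omega
  · intro M hM
    set A : Set V := {v | Sum.inl v ∈ M} with hAdef
    set I : Set (Fin k) := {i | Sum.inr i ∈ M} with hIdef
    have hAmod : IsModule G A := by
      intro v hv
      rcases hM (Sum.inl v) hv with h | h
      · exact Or.inl (fun a ha => h (Sum.inl a) ha)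
      · exact Or.inr (fun a ha => h (Sum.inl a) ha)
    have hOut : ∀ u ∉ A, ((∀ i ∈ I, i ∈ colr G hk u) ∧ ∀ a ∈ A, G.Adj u a) ∨
        ((∀ i ∈ I, i ∉ colr G hk u) ∧ ∀ a ∈ A, ¬ G.Adj u a) := by
      intro u hu
      rcases hM (Sum.inl u) hu with h | h
      · exact Or.inl ⟨fun i hi => h (Sum.inr i) hi, fun a ha => h (Sum.inl a) ha⟩
      · exact Or.inr ⟨fun i hi => h (Sum.inr i) hi, fun a ha => h (Sum.inl a) ha⟩
    by_cases hI : I = ∅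
    · right
      have hconst : ∀ x ∈ A, ∀ y ∈ A, colr G hk x = colr G hk y := by
        intro x hx y hy
        ext i
        have hiM : Sum.inr i ∉ M := by
          intro h
          have : i ∈ I := h
          rw [hI] at this
          exact this
        rcases hM (Sum.inr i) hiM with h | h
        · exact iff_of_true (h (Sum.inl x) hx) (h (Sum.inl y) hy)
        · exact iff_of_false (h (Sum.inl x) hx) (h (Sum.inl y) hy)
      have hsub := colr_module_subsingleton hk hmk hAmod hconst
      rintro (a | i) hx (b | j) hy
      · exact congrArg Sum.inl (hsub hx hy)
      · exact absurd (show j ∈ I from hy) (by rw [hI]; exact Set.notMem_empty j)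
      · exact absurd (show i ∈ I from hx) (by rw [hI]; exact Set.notMem_empty i)
      · exact absurd (show i ∈ I from hx) (by rw [hI]; exact Set.notMem_empty i)
    · by_cases hA : A = ∅
      · by_cases hI1 : I.Subsingleton
        · right
          rintro (a | i) hx (b | j) hy
          · exact absurd (show a ∈ A from hx) (by rw [hA]; exact Set.notMem_empty a)
          · exact absurd (show a ∈ A from hx) (by rw [hA]; exact Set.notMem_empty a)
          · exact absurd (show b ∈ A from hy) (by rw [hA]; exact Set.notMem_empty b)
          · exact congrArg Sum.inr (hI1 hx hy)
        · exfalso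
          rw [Set.not_subsingleton_iff] at hI1
          obtain ⟨i, hi, j, hj, hij⟩ := hI1
          obtain ⟨u, huc, hcu⟩ := big_sing hk hmk hbig i
          have huA : u ∉ A := by rw [hA]; exact Set.notMem_empty u
          rcases hOut u huA with ⟨h1, _⟩ | ⟨h1, _⟩
          · have := h1 j hj
            rw [hcu, Finset.mem_singleton] at this
            exact hij this.symm
          · have := h1 i hi
            rw [hcu] at this
            exact this (Finset.mem_singleton_self i)
      · have hInon : I.Nonempty := Set.nonempty_iff_ne_empty.mpr hI
        have hAnon : A.Nonempty := Set.nonempty_iff_ne_empty.mpr hA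
        have hcode : ∀ v ∈ A, ∀ j, j ∈ colr G hk v → j ∈ I := by
          intro v hv j hj
          by_contra hjI
          obtain ⟨i0, hi0⟩ := hInon
          rcases hM (Sum.inr j) hjI with h | h
          · exact extG_adj_rr (h (Sum.inr i0) hi0)
          · exact h (Sum.inl v) hv hj
        by_cases hIuniv : I = Set.univ
        · left
          have hAuniv : A = Set.univ := by
            by_contra hne
            obtain ⟨u, hu⟩ : ∃ u, u ∉ A := by
              by_contra h
              push_neg at h
              exact hne (Set.eq_univ_of_forall h)
            have notinA : ∀ y : V, colr G hk y ≠ ∅ → colr G hk y ≠ Finset.univ → y ∈ A := by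
              intro y hy1 hy2
              by_contra hyA
              rcases hOut y hyA with ⟨g1, _⟩ | ⟨g1, _⟩
              · exact hy2 (Finset.eq_univ_iff_forall.mpr
                  (fun i => g1 i (by rw [hIuniv]; trivial)))
              · refine hy1 ?_
                ext i
                simp only [Finset.notMem_empty, iff_false]
                exact g1 i (by rw [hIuniv]; trivial)
            rcases hOut u hu with ⟨h1, h2⟩ | ⟨h1, h2⟩
            · have hcu : colr G hk u = Finset.univ :=
                Finset.eq_univ_iff_forall.mpr (fun i => h1 i (by rw [hIuniv]; trivial))
              obtain ⟨y, hnadj, hyne, hy1, hy2⟩ := colr_univ_witness hk hmk hcu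
              exact hnadj (h2 y (notinA y hy1 hy2))
            · have hcu : colr G hk u = ∅ := by
                ext i
                simp only [Finset.notMem_empty, iff_false]
                exact h1 i (by rw [hIuniv]; trivial)
              obtain ⟨y, hadj, hy0, hy1⟩ := colr_empty_witness hk hmk hcu ⟨0, by omega⟩
              have hy2 : colr G hk y ≠ Finset.univ := by
                intro he
                exact hy0 (by rw [he]; exact Finset.mem_univ _)
              exact h2 y (notinA y hy1 hy2) hadj
          apply Set.eq_univ_of_forall
          rintro (a | i)
          · exact (show a ∈ A by rw [hAuniv]; trivial)
          · exact (show i ∈ I by rw [hIuniv]; trivial)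
        · by_cases hI1 : I.Subsingleton
          · exfalso
            obtain ⟨i, hIi⟩ : ∃ i, I = {i} := by
              obtain ⟨i0, hi0⟩ := hInon
              exact ⟨i0, Set.eq_singleton_iff_unique_mem.mpr ⟨hi0, fun w hw => hI1 hw hi0⟩⟩
            have hsubi : ∀ v ∈ A, colr G hk v = ∅ ∨ colr G hk v = {i} := by
              intro v hv
              apply Finset.subset_singleton_iff.mp
              intro j hj
              have := hcode v hv j hj
              rw [hIi] at this
              exact Finset.mem_singleton.mpr this
            have hiI : i ∈ I := by rw [hIi]; rfl
            by_cases hex : ∃ x ∈ A, colr G hk x = ∅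
            · obtain ⟨x, hxA, hx0⟩ := hex
              obtain ⟨y, hadj, hyni, hyne⟩ := colr_empty_witness hk hmk hx0 i
              have hyA : y ∉ A := by
                intro hyA
                rcases hsubi y hyA with h | h
                · exact hyne h
                · rw [h] at hyni
                  exact hyni (Finset.mem_singleton_self i)
              rcases hOut y hyA with ⟨g1, g2⟩ | ⟨g1, g2⟩
              · exact hyni (g1 i hiI)
              · exact g2 x hxA hadj.symm
            · push_neg at hex
              have hconstA : ∀ x ∈ A, ∀ y ∈ A, colr G hk x = colr G hk y := by
                intro x hx y hy
                rcases hsubi x hx with h | h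
                · exact absurd h (hex x hx).ne_empty
                · rcases hsubi y hy with h' | h'
                  · exact absurd h' (hex y hy).ne_empty
                  · rw [h, h']
              have hAsub := colr_module_subsingleton hk hmk hAmod hconstA
              obtain ⟨a, haA⟩ := hAnon
              have hAa : A = {a} := Set.eq_singleton_iff_unique_mem.mpr
                ⟨haA, fun w hw => hAsub hw haA⟩
              have hca : colr G hk a = {i} := by
                rcases hsubi a haA with h | h
                · exact absurd h (hex a haA).ne_empty
                · exact h
              have hmemA : ∀ w, w ∈ A ↔ w = a := by
                intro w
                rw [hAa]
                rfl
              by_cases haB : a ∈ B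
              · rcases hBalt with hcliq | ⟨hstab, hs6d⟩
                · obtain ⟨j, hji⟩ : ∃ j : Fin k, j ≠ i := by
                    by_cases h : i = ⟨0, by omega⟩
                    · refine ⟨⟨1, by omega⟩, ?_⟩
                      rw [h]
                      simp [Fin.ext_iff]
                    · exact ⟨⟨0, by omega⟩, fun e => h e.symm⟩
                  obtain ⟨u, huc, hcu⟩ := big_sing hk hmk hbig j
                  have huB : u ∈ B := hmemB u huc
                  have hua : u ≠ a := by
                    intro e
                    rw [e, hca] at hcu
                    exact hji (Finset.singleton_injective hcu.symm)
                  have huA : u ∉ A := by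
                    rw [hmemA]
                    exact hua
                  rcases hOut u huA with ⟨g1, g2⟩ | ⟨g1, g2⟩
                  · have := g1 i hiI
                    rw [hcu, Finset.mem_singleton] at this
                    exact hji this.symm
                  · exact g2 a haA (hcliq u huB a haB hua)
                · obtain ⟨u, huB, hiu, hune⟩ := hs6d i
                  have hua : u ≠ a := by
                    intro e
                    rw [e, hca] at hune
                    exact hune rfl
                  have huA : u ∉ A := by
                    rw [hmemA]
                    exact hua
                  rcases hOut u huA with ⟨g1, g2⟩ | ⟨g1, g2⟩
                  · exact hstab u huB a haB (g2 a haA)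
                  · exact (g1 i hiI) hiu
              · obtain ⟨j, hji⟩ : ∃ j : Fin k, j ≠ i := by
                  by_cases h : i = ⟨0, by omega⟩
                  · refine ⟨⟨1, by omega⟩, ?_⟩
                    rw [h]
                    simp [Fin.ext_iff]
                  · exact ⟨⟨0, by omega⟩, fun e => h e.symm⟩
                rcases hBmod a haB with hall | hnone
                · obtain ⟨u, huc, hcu⟩ := big_sing hk hmk hbig j
                  have huB : u ∈ B := hmemB u huc
                  have huA : u ∉ A := by
                    rw [hmemA]
                    intro e
                    exact haB (e ▸ huB)
                  rcases hOut u huA with ⟨g1, g2⟩ | ⟨g1, g2⟩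
                  · have := g1 i hiI
                    rw [hcu, Finset.mem_singleton] at this
                    exact hji this.symm
                  · exact g2 a haA (hall u huB).symm
                · obtain ⟨u, huc, hcu⟩ := big_sing hk hmk hbig i
                  have huB : u ∈ B := hmemB u huc
                  have huA : u ∉ A := by
                    rw [hmemA]
                    intro e
                    exact haB (e ▸ huB)
                  rcases hOut u huA with ⟨g1, g2⟩ | ⟨g1, g2⟩
                  · exact (hnone u huB) (g2 a haA).symm
                  · have := g1 i hiI
                    rw [hcu] at this
                    exact this (Finset.mem_singleton_self i)
          · -- 2 ≤ |I|, I proper : crossing kill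
            exfalso
            rw [Set.not_subsingleton_iff] at hI1
            obtain ⟨i1, hi1, i2, hi2, hi12⟩ := hI1
            obtain ⟨j0, hj0⟩ : ∃ j : Fin k, j ∉ I := by
              by_contra h
              push_neg at h
              exact hIuniv (Set.eq_univ_of_forall h)
            have h3 : 3 ≤ k := by
              by_contra h
              have hk2 : k = 2 := by omega
              have hd1 : j0 ≠ i1 := fun e => hj0 (e ▸ hi1)
              have hd2 : j0 ≠ i2 := fun e => hj0 (e ▸ hi2)
              have hcard3 : ({i1, i2, j0} : Finset (Fin k)).card = 3 := by
                rw [Finset.card_insert_of_notMem (by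
                    simp only [Finset.mem_insert, Finset.mem_singleton]
                    push_neg
                    exact ⟨hi12, Ne.symm hd1⟩),
                  Finset.card_insert_of_notMem (by
                    simp only [Finset.mem_singleton]
                    exact Ne.symm hd2),
                  Finset.card_singleton]
              have hle := Finset.card_le_univ ({i1, i2, j0} : Finset (Fin k))
              rw [hcard3, Fintype.card_fin, hk2] at hle
              omega
            set P : ℕ → Prop := fun n => ∃ hn : n < k, (⟨n, hn⟩ : Fin k) ∈ I with hPdef
            have hPa : P (i1 : ℕ) := ⟨i1.2, by simpa using hi1⟩
            have hPb : ¬ P (j0 : ℕ) := by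
              rintro ⟨hn, hmem⟩
              exact hj0 (by simpa using hmem)
            obtain ⟨t, ht1, hbd⟩ := exists_boundary P i1.2 j0.2 hPa hPb
            have ht : t < k - 1 := by omega
            obtain ⟨u, huc, hcu⟩ := big_pair hk hmk h3 hbig ht
            set e0 : Fin k := ⟨t, by omega⟩ with he0
            set e1 : Fin k := ⟨t + 1, by omega⟩ with he1
            have hucu : colr G hk u = {e0, e1} := hcu
            rcases hbd with ⟨hp0, hp1⟩ | ⟨hp0, hp1⟩
            · -- e0 ∈ I, e1 ∉ I
              have he0I : e0 ∈ I := by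
                obtain ⟨hn, hmem⟩ := hp0
                exact hmem
              have he1I : e1 ∉ I := fun h => hp1 ⟨by omega, h⟩
              have huA : u ∉ A := by
                intro huA
                exact he1I (hcode u huA e1 (by rw [hucu]; simp))
              rcases hOut u huA with ⟨g1, _⟩ | ⟨g1, _⟩
              · have hm1 := g1 i1 hi1
                have hm2 := g1 i2 hi2
                rw [hucu, Finset.mem_insert, Finset.mem_singleton] at hm1 hm2
                rcases hm1 with h1 | h1
                · rcases hm2 with h2 | h2
                  · exact hi12 (h1.trans h2.symm)
                  · exact he1I (h2 ▸ hi2)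
                · exact he1I (h1 ▸ hi1)
              · exact (g1 e0 he0I) (by rw [hucu]; simp)
            · -- e0 ∉ I, e1 ∈ I
              have he1I : e1 ∈ I := by
                obtain ⟨hn, hmem⟩ := hp1
                exact hmem
              have he0I : e0 ∉ I := fun h => hp0 ⟨by omega, h⟩
              have huA : u ∉ A := by
                intro huA
                exact he0I (hcode u huA e0 (by rw [hucu]; simp))
              rcases hOut u huA with ⟨g1, _⟩ | ⟨g1, _⟩
              · have hm1 := g1 i1 hi1
                have hm2 := g1 i2 hi2
                rw [hucu, Finset.mem_insert, Finset.mem_singleton] at hm1 hm2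
                rcases hm1 with h1 | h1
                · exact he0I (h1 ▸ hi1)
                · rcases hm2 with h2 | h2
                  · exact he0I (h2 ▸ hi2)
                  · exact hi12 (h1.trans h2.symm)
              · exact (g1 e1 he1I) (by rw [hucu]; simp)

/-! ### upper and lower bounds -/

lemma upper_bound (hnp : ∀ j : ℕ, modCliqueStab G ≠ 2 ^ j) (hm3 : 3 ≤ modCliqueStab G) :
    HasPrimeExt G (Nat.clog 2 (modCliqueStab G)) := by
  set m := modCliqueStab G with hmdef
  set k := Nat.clog 2 m with hkdef
  have hmk : m ≤ 2 ^ k := Nat.le_pow_clog (by norm_num) m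
  have hmk' : m ≤ 2 ^ k - 1 := by
    have := hnp k
    omega
  have hk2 : 2 ≤ k := by
    have := (Nat.lt_clog_iff_pow_lt (by norm_num)).mpr (show 2 ^ 1 < m by omega)
    omega
  have hmlow : 2 ^ (k - 1) < m := by
    have hp := Nat.pow_pred_clog_lt_self (b := 2) (by norm_num) (x := m) (by omega)
    rw [Nat.pred_eq_sub_one] at hp
    exact hp
  obtain ⟨B, hBmod, htype, hBcard⟩ := exists_max_module (G := G)
  exact ⟨extG G (colr G hk2), fun a b => Iff.rfl,
    extG_prime hk2 hmk' hBmod htype hBcard hm3 hmlow⟩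

lemma lower_bound (hm2 : 2 ≤ modCliqueStab G) {p : ℕ} (hp : HasPrimeExt G p) :
    Nat.clog 2 (modCliqueStab G) ≤ p := by
  classical
  obtain ⟨H, hres, hcard4, hHmod⟩ := hp
  obtain ⟨B, hBmod, htype, hBcard⟩ := exists_max_module (G := G)
  rw [Nat.clog_le_iff_le_pow (by norm_num)]
  have hdist : ∀ a ∈ B, ∀ b ∈ B, a ≠ b →
      ∃ i : Fin p, ¬ (H.Adj (Sum.inl a) (Sum.inr i) ↔ H.Adj (Sum.inl b) (Sum.inr i)) := by
    intro a ha b hb hab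
    have hpair : ¬ IsModule H {Sum.inl a, Sum.inl b} := by
      intro hmod
      rcases hHmod _ hmod with he | hs
      · have h1 : ({Sum.inl a, Sum.inl b} : Set (V ⊕ Fin p)).ncard = 2 :=
          Set.ncard_pair (fun e => hab (Sum.inl.inj e))
        have h2 : (Set.univ : Set (V ⊕ Fin p)).ncard = Nat.card (V ⊕ Fin p) :=
          Set.ncard_univ _
        rw [← he, h1] at h2
        omega
      · exact hab (Sum.inl.inj (hs (Set.mem_insert _ _) (Set.mem_insert_of_mem _ rfl)))
    unfold IsModule at hpair
    push_neg at hpair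
    obtain ⟨x, hx, hnall, hnnone⟩ := hpair
    obtain ⟨y1, hy1m, hny⟩ := hnall
    obtain ⟨y2, hy2m, hay⟩ := hnnone
    -- x is not inl u
    have hxr : ∃ i : Fin p, x = Sum.inr i := by
      rcases x with u | i
      · exfalso
        have hu1 : u ≠ a := fun e => hx (by rw [e]; exact Set.mem_insert _ _)
        have hu2 : u ≠ b := fun e => hx (by rw [e]; exact Set.mem_insert_of_mem _ rfl)
        have hiff : H.Adj (Sum.inl u) (Sum.inl a) ↔ H.Adj (Sum.inl u) (Sum.inl b) := by
          rw [hres, hres]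
          by_cases huB : u ∈ B
          · rcases htype with hc | hs
            · exact iff_of_true (hc u huB a ha hu1) (hc u huB b hb hu2)
            · exact iff_of_false (hs u huB a ha) (hs u huB b hb)
          · rcases hBmod u huB with h | h
            · exact iff_of_true (h a ha) (h b hb)
            · exact iff_of_false (h a ha) (h b hb)
        -- y1, y2 ∈ pair, Adj x y2, ¬Adj x y1, so y1 ≠ y2
        have hy12 : y1 ≠ y2 := fun e => hny (e ▸ hay)
        rcases hy1m with rfl | rfl <;> rcases hy2m with rfl | rfl
        · exact hy12 rfl
        · exact hny (hiff.mpr hay)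
        · exact hny (hiff.mp hay)
        · exact hy12 rfl
      · exact ⟨i, rfl⟩
    obtain ⟨i, rfl⟩ := hxr
    refine ⟨i, fun hiff => ?_⟩
    have hsa : H.Adj (Sum.inl a) (Sum.inr i) ↔ H.Adj (Sum.inr i) (Sum.inl a) :=
      ⟨fun h => h.symm, fun h => h.symm⟩
    have hsb : H.Adj (Sum.inl b) (Sum.inr i) ↔ H.Adj (Sum.inr i) (Sum.inl b) :=
      ⟨fun h => h.symm, fun h => h.symm⟩
    have hiff' : H.Adj (Sum.inr i) (Sum.inl a) ↔ H.Adj (Sum.inr i) (Sum.inl b) :=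
      (hsa.symm.trans hiff).trans hsb
    have hy12 : y1 ≠ y2 := fun e => hny (e ▸ hay)
    rcases hy1m with rfl | rfl <;> rcases hy2m with rfl | rfl
    · exact hy12 rfl
    · exact hny (hiff'.mpr hay)
    · exact hny (hiff'.mp hay)
    · exact hy12 rfl
  -- injection into Fin p → Bool
  set f : V → (Fin p → Bool) := fun a i => decide (H.Adj (Sum.inl a) (Sum.inr i)) with hfdef
  have hinj : Set.InjOn f B := by
    intro a ha b hb hfe
    by_contra hab
    obtain ⟨i, hi⟩ := hdist a ha b hb hab
    apply hi
    have := congrFun hfe i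
    rw [hfdef] at this
    simp only [decide_eq_decide] at this
    exact this
  have hle : B.ncard ≤ (Set.univ : Set (Fin p → Bool)).ncard := by
    exact Set.ncard_le_ncard_of_injOn f (fun a _ => Set.mem_univ (f a)) hinj
      Set.finite_univ
  rw [Set.ncard_univ, Nat.card_eq_fintype_card] at hle
  simp only [Fintype.card_fun, Fintype.card_bool, Fintype.card_fin] at hle
  rw [← hBcard]
  exact hle

end PBP

theorem prime_bound_eq_clog {V : Type*} [Finite V] (G : SimpleGraph V)
    (h2 : 2 ≤ modCliqueStab G) (hnp : ∀ k : ℕ, modCliqueStab G ≠ 2 ^ k) :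
    primeBound G = Nat.clog 2 (modCliqueStab G) := by
  cases nonempty_fintype V
  have hm3 : 3 ≤ modCliqueStab G := by
    have h1 := hnp 1
    norm_num at h1
    omega
  have hup := PBP.upper_bound (G := G) hnp hm3
  apply le_antisymm
  · exact Nat.sInf_le hup
  · exact le_csInf ⟨_, hup⟩ (fun p hp => PBP.lower_bound (G := G) h2 hp)
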